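/- Let d ≥ 1 and 0 = a_0 < a_1 < ⋯ < a_r = d be integers, set b_i = d − a_i, and let S = ⟨a_0, …, a_r⟩ and T = ⟨b_0, …, b_r⟩ be the numerical semigroups generated by these numbers. Let α and β be nonnegative real numbers with α < 1. Then there exists L ∈ ℕ such that for every integer l ≥ L and every s ∈ S with s ≤ d·α·l + β and d·α·l + β ≤ d·l, there exist λ_0, …, λ_r ∈ ℕ with λ_0 + ⋯ + λ_r = l, s = λ_0 a_0 + ⋯ + λ_r a_r, and d·l − s = λ_0 b_0 + ⋯ + λ_r b_r (in particular d·l − s ∈ T). -/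

import Mathlib

lemma rep {r : ℕ} (a : Fin (r+1) → ℕ) {s : ℕ} (hs : s ∈ AddSubmonoid.closure (Set.range a)) :
    ∃ μ : Fin (r+1) → ℕ, ∑ i, μ i * a i = s := by
  induction hs using AddSubmonoid.closure_induction with
  | mem x hx =>
    obtain ⟨j, rfl⟩ := hx
    exact ⟨fun i => if i = j then 1 else 0, by simp⟩
  | zero => exact ⟨0, by simp⟩
  | add x y hx hy ihx ihy =>
    obtain ⟨μ, hμ⟩ := ihx; obtain ⟨ν, hν⟩ := ihy
    exact ⟨μ + ν, by simp [add_mul, Finset.sum_add_distrib, hμ, hν]⟩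

lemma norm_rep {r d : ℕ} (hd : 1 ≤ d) (a : Fin (r+1) → ℕ) (har : a (Fin.last r) = d)
    (μ : Fin (r+1) → ℕ) :
    ∃ ν : Fin (r+1) → ℕ, ∑ i, ν i * a i = ∑ i, μ i * a i ∧
      d * ∑ i, ν i ≤ (∑ i, μ i * a i) + (r+1) * d^2 := by
  subst har
  set d := a (Fin.last r) with hdd
  set X : ℕ := ∑ j, (μ j / d) * a j with hX
  have key : ∀ j : Fin (r+1), μ j % d * a j + μ j / d * a j * d = μ j * a j := by
    intro j; rw [mul_right_comm, ← add_mul, Nat.mod_add_div']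
  refine ⟨fun i => if i = Fin.last r then X + μ (Fin.last r) % d else μ i % d, ?_, ?_⟩
  · rw [Fin.sum_univ_castSucc, Fin.sum_univ_castSucc (f := fun i => μ i * a i)]
    beta_reduce
    rw [if_pos rfl]
    rw [Finset.sum_congr rfl (fun i _ => by
      rw [if_neg (Fin.castSucc_lt_last i).ne] : ∀ i ∈ Finset.univ,
        (if (i : Fin r).castSucc = Fin.last r then X + μ (Fin.last r) % d else μ i.castSucc % d) * a i.castSucc
        = μ i.castSucc % d * a i.castSucc)]
    rw [hX, Fin.sum_univ_castSucc (f := fun j => μ j / d * a j)]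
    calc ∑ i : Fin r, μ i.castSucc % d * a i.castSucc +
          (∑ i : Fin r, μ i.castSucc / d * a i.castSucc + μ (Fin.last r) / d * a (Fin.last r) + μ (Fin.last r) % d) * d
        = ∑ i : Fin r, (μ i.castSucc % d * a i.castSucc + μ i.castSucc / d * a i.castSucc * d)
            + (μ (Fin.last r) % d * a (Fin.last r) + μ (Fin.last r) / d * a (Fin.last r) * d) := by
          rw [Finset.sum_add_distrib, add_mul, add_mul, Finset.sum_mul, ← hdd]; ring
      _ = ∑ i : Fin r, μ i.castSucc * a i.castSucc + μ (Fin.last r) * a (Fin.last r) := by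
          rw [Finset.sum_congr rfl (fun i _ => key i.castSucc), key]
  · rw [Fin.sum_univ_castSucc (f := fun i => if i = Fin.last r then X + μ (Fin.last r) % d else μ i % d)]
    beta_reduce
    rw [if_pos rfl]
    rw [Finset.sum_congr rfl (fun i _ => if_neg (Fin.castSucc_lt_last i).ne : ∀ i ∈ Finset.univ,
      (if (i : Fin r).castSucc = Fin.last r then X + μ (Fin.last r) % d else μ i.castSucc % d) = μ i.castSucc % d)]
    have hmod : ∑ i : Fin r, μ i.castSucc % d + μ (Fin.last r) % d ≤ (r+1) * d := by
      have h2 : ∀ j : Fin (r+1), μ j % d ≤ d := fun j => (Nat.mod_lt _ hd).le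
      calc ∑ i : Fin r, μ i.castSucc % d + μ (Fin.last r) % d
          ≤ ∑ _i : Fin r, d + d := by
            gcongr with i _ <;> exact h2 _
        _ = (r+1) * d := by simp [Finset.sum_const]; ring
    have hXle : d * X ≤ ∑ i, μ i * a i := by
      rw [hX, Finset.mul_sum]
      refine Finset.sum_le_sum fun j _ => ?_
      have hdj : d * (μ j / d) ≤ μ j := by rw [mul_comm]; exact Nat.div_mul_le_self _ _
      calc d * (μ j / d * a j) = d * (μ j / d) * a j := (mul_assoc _ _ _).symm
        _ ≤ μ j * a j := Nat.mul_le_mul_right _ hdj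
    calc d * (∑ i : Fin r, μ i.castSucc % d + (X + μ (Fin.last r) % d))
        = d * X + d * (∑ i : Fin r, μ i.castSucc % d + μ (Fin.last r) % d) := by ring
      _ ≤ ∑ i, μ i * a i + d * ((r+1)*d) := by gcongr
      _ = ∑ i, μ i * a i + (r+1) * d^2 := by ring

theorem stmt2 {r : ℕ} (d : ℕ) (hd : 1 ≤ d) (a b : Fin (r + 1) → ℕ)
    (ha0 : a 0 = 0) (hmono : StrictMono a) (har : a (Fin.last r) = d)
    (hb : ∀ i, b i = d - a i)
    (α β : ℝ) (hα0 : 0 ≤ α) (hα1 : α < 1) (hβ : 0 ≤ β) :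
    ∃ L : ℕ, ∀ l : ℕ, L ≤ l → ∀ s : ℕ,
      s ∈ AddSubmonoid.closure (Set.range a) →
      (s : ℝ) ≤ (d : ℝ) * α * l + β → ((d : ℝ) * α * l + β) ≤ (d : ℝ) * l →
      ∃ c : Fin (r + 1) → ℕ,
        (∑ i, c i) = l ∧ (∑ i, c i * a i) = s ∧ (∑ i, c i * b i) = d * l - s ∧
        d * l - s ∈ AddSubmonoid.closure (Set.range b) := by
  have hab : ∀ i, a i ≤ d := fun i => har ▸ hmono.monotone (Fin.le_last i)
  refine ⟨⌈(β + ((r:ℝ)+1) * (d:ℝ)^2) / ((d:ℝ) * (1 - α))⌉₊, fun l hl s hs hs1 hs2 => ?_⟩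
  obtain ⟨μ, hμ⟩ := rep a hs
  obtain ⟨ν, hν1, hν2⟩ := norm_rep hd a har μ
  rw [hμ] at hν1 hν2
  set w := ∑ i, ν i with hw
  have hd0 : (0:ℝ) < d := by exact_mod_cast hd
  have hsl : s ≤ d * l := by exact_mod_cast (hs1.trans hs2)
  have hwl : w ≤ l := by
    have hlL : (β + ((r:ℝ)+1) * (d:ℝ)^2) / ((d:ℝ) * (1 - α)) ≤ (l:ℝ) :=
      (Nat.ceil_le.mp hl)
    rw [div_le_iff₀ (mul_pos hd0 (by linarith))] at hlL
    have h2 : ((d * w : ℕ) : ℝ) ≤ (s : ℝ) + ((r:ℝ)+1) * (d:ℝ)^2 := by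
      push_cast
      exact_mod_cast hν2
    have e : (l:ℝ) * ((d:ℝ) * (1 - α)) = (d:ℝ)*(l:ℝ) - (d:ℝ)*α*(l:ℝ) := by ring
    have hwd : ((d:ℝ)) * w ≤ (d:ℝ) * l := by push_cast at h2 ⊢; nlinarith
    have := (mul_le_mul_iff_right₀ hd0).mp hwd
    exact_mod_cast this
  set c : Fin (r+1) → ℕ := Function.update ν 0 (ν 0 + (l - w)) with hc
  have hsum : ∑ i, c i = l := by
    rw [hc, Finset.sum_update_of_mem (Finset.mem_univ 0)]
    have := Finset.sum_eq_sum_sdiff_singleton_add (Finset.mem_univ (0 : Fin (r+1))) ν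
    omega
  have hsa : ∑ i, c i * a i = s := by
    rw [← hν1]
    refine Finset.sum_congr rfl fun i _ => ?_
    by_cases h : i = 0
    · subst h; simp [hc, ha0]
    · rw [hc, Function.update_of_ne h]
  have hsb : ∑ i, c i * b i = d * l - s := by
    have h1 : ∀ i ∈ Finset.univ, c i * a i ≤ c i * d :=
      fun i _ => Nat.mul_le_mul_left _ (hab i)
    calc ∑ i, c i * b i = ∑ i, (c i * d - c i * a i) := by
          refine Finset.sum_congr rfl fun i _ => ?_
          rw [hb i, Nat.mul_sub]
      _ = (∑ i, c i * d) - ∑ i, c i * a i := Finset.sum_tsub_distrib Finset.univ h1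
      _ = d * l - s := by rw [hsa, ← Finset.sum_mul, hsum, mul_comm]
  refine ⟨c, hsum, hsa, hsb, ?_⟩
  rw [← hsb]
  refine AddSubmonoid.sum_mem _ fun i _ => ?_
  have hbi : b i ∈ AddSubmonoid.closure (Set.range b) :=
    AddSubmonoid.subset_closure (Set.mem_range_self i)
  simpa [smul_eq_mul] using nsmul_mem hbi (c i)
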